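/- Let E be a real inner product space, let 0 < m ≤ L, and let f : E → ℝ be differentiable with stationary point x⋆ (∇f(x⋆) = 0) such that for all x ∈ E, (L + m)·⟨x − x⋆, ∇f(x)⟩ ≥ m·L·‖x − x⋆‖² + ‖∇f(x)‖² (i.e. f ∈ S(m,L)). Then for every stepsize α > 0 and every x ∈ E, ‖x − α·∇f(x) − x⋆‖ ≤ max(|1 − α·m|, |1 − α·L|)·‖x − x⋆‖. -/
import Mathlib


open RealInnerProductSpace

/-- Scalar core of the gradient-descent contraction estimate. -/
theorem gradient_step_contraction_scalar
    (m L α A B C : ℝ) (hm : 0 < m) (hmL : m ≤ L) (hα : 0 < α)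
    (hA0 : 0 ≤ A) (hC0 : 0 ≤ C)
    (hS : C - (L + m) * B + m * L * A ≤ 0)
    (hU : 0 ≤ C - 2 * m * B + m ^ 2 * A)
    (hV : 0 ≤ C - 2 * L * B + L ^ 2 * A)
    (hCS : B ^ 2 ≤ A * C) :
    A - 2 * α * B + α ^ 2 * C ≤ max |1 - α * m| |1 - α * L| ^ 2 * A := by
  set p : ℝ := 1 - α * m with hp
  set q : ℝ := 1 - α * L with hq
  set ρ : ℝ := max |p| |q| with hρ
  have hρ0 : 0 ≤ ρ := le_trans (abs_nonneg p) (le_max_left _ _)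
  have hp2 : p ^ 2 ≤ ρ ^ 2 := by
    have h := le_max_left |p| |q|
    nlinarith [abs_nonneg p, sq_abs p]
  have hq2 : q ^ 2 ≤ ρ ^ 2 := by
    have h := le_max_right |p| |q|
    nlinarith [abs_nonneg q, sq_abs q]
  have hpq : p * q ≤ ρ ^ 2 := by
    have h1 : p * q ≤ |p| * |q| := by
      calc p * q ≤ |p * q| := le_abs_self _
      _ = |p| * |q| := abs_mul p q
    have h2 : |p| * |q| ≤ ρ * ρ :=
      mul_le_mul (le_max_left _ _) (le_max_right _ _) (abs_nonneg q) hρ0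
    nlinarith
  rcases eq_or_lt_of_le hmL with hEq | hLt
  · subst hEq
    have hS0 : C - 2 * m * B + m ^ 2 * A = 0 := by nlinarith
    have hBm : B = m * A := by nlinarith [sq_nonneg (B - m * A)]
    have hCmA : C = m ^ 2 * A := by nlinarith
    have hcalc : A - 2 * α * B + α ^ 2 * C = p ^ 2 * A := by
      rw [hBm, hCmA, hp]; ring
    rw [hcalc]
    nlinarith
  · have hLm : 0 < (L - m) ^ 2 := pow_pos (sub_pos.2 hLt) 2
    have hid : (L - m) ^ 2 * (ρ ^ 2 * A - (A - 2 * α * B + α ^ 2 * C))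
        = (ρ ^ 2 - q ^ 2) * (C - 2 * m * B + m ^ 2 * A)
          + (ρ ^ 2 - p ^ 2) * (C - 2 * L * B + L ^ 2 * A)
          + 2 * ((ρ ^ 2 - p * q) * (-(C - (L + m) * B + m * L * A))) := by
      rw [hp, hq]; ring
    have t1 := mul_nonneg (sub_nonneg.2 hq2) hU
    have t2 := mul_nonneg (sub_nonneg.2 hp2) hV
    have t3 := mul_nonneg (sub_nonneg.2 hpq) (neg_nonneg.2 hS)
    have h0 : 0 ≤ (L - m) ^ 2 * (ρ ^ 2 * A - (A - 2 * α * B + α ^ 2 * C)) := by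
      rw [hid]; linarith
    have := (mul_nonneg_iff_of_pos_left hLm).mp h0
    linarith

/-- For `f ∈ S(m,L)` with stationary point `x⋆`, one step of gradient descent with any
stepsize `α > 0` is a contraction with factor `max |1 − αm| |1 − αL|`. -/
theorem gradient_step_contraction
    {E : Type*} [NormedAddCommGroup E] [InnerProductSpace ℝ E] [CompleteSpace E]
    (m L : ℝ) (hm : 0 < m) (hmL : m ≤ L)
    (f : E → ℝ) (f' : E → E) (hf : ∀ x, HasGradientAt f (f' x) x)
    (xstar : E) (hstar : f' xstar = 0)
    (hsector : ∀ x : E,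
      (L + m) * ⟪x - xstar, f' x⟫ ≥ m * L * ‖x - xstar‖ ^ 2 + ‖f' x‖ ^ 2)
    (α : ℝ) (hα : 0 < α) :
    ∀ x : E, ‖x - α • f' x - xstar‖ ≤ max |1 - α * m| |1 - α * L| * ‖x - xstar‖ := by
  intro x
  have hsec := hsector x
  -- abbreviations (plain lets as hypotheses via generalize would lose info; use explicit terms)
  have expand : ∀ c : ℝ, ‖f' x - c • (x - xstar)‖ ^ 2
      = ‖f' x‖ ^ 2 - 2 * c * ⟪x - xstar, f' x⟫ + c ^ 2 * ‖x - xstar‖ ^ 2 := by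
    intro c
    rw [@norm_sub_sq_real, real_inner_smul_right, norm_smul, real_inner_comm]
    simp [mul_pow, sq_abs]
    ring
  have hU := expand m
  have hV := expand L
  have hCS : ⟪x - xstar, f' x⟫ ^ 2 ≤ ‖x - xstar‖ ^ 2 * ‖f' x‖ ^ 2 := by
    have h := real_inner_mul_inner_self_le (x - xstar) (f' x)
    rw [real_inner_self_eq_norm_sq, real_inner_self_eq_norm_sq] at h
    nlinarith
  have key := gradient_step_contraction_scalar m L α (‖x - xstar‖ ^ 2)
      (⟪x - xstar, f' x⟫) (‖f' x‖ ^ 2) hm hmL hα (sq_nonneg _) (sq_nonneg _)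
      (by linarith) (by rw [← hU]; positivity) (by rw [← hV]; positivity) hCS
  have hrw : x - α • f' x - xstar = (x - xstar) - α • f' x := by abel
  have hexp : ‖(x - xstar) - α • f' x‖ ^ 2
      = ‖x - xstar‖ ^ 2 - 2 * α * ⟪x - xstar, f' x⟫ + α ^ 2 * ‖f' x‖ ^ 2 := by
    rw [@norm_sub_sq_real, real_inner_smul_right, norm_smul]
    simp [mul_pow, sq_abs]
    ring
  have hρ0 : 0 ≤ max |1 - α * m| |1 - α * L| :=
    le_trans (abs_nonneg _) (le_max_left _ _)
  have h2 : ‖(x - xstar) - α • f' x‖ ^ 2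
      ≤ (max |1 - α * m| |1 - α * L| * ‖x - xstar‖) ^ 2 := by
    rw [hexp]
    calc _ ≤ max |1 - α * m| |1 - α * L| ^ 2 * ‖x - xstar‖ ^ 2 := key
    _ = (max |1 - α * m| |1 - α * L| * ‖x - xstar‖) ^ 2 := by ring
  rw [hrw]
  nlinarith [norm_nonneg ((x - xstar) - α • f' x),
    mul_nonneg hρ0 (norm_nonneg (x - xstar))]
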